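/- Let τ be a θ-compatible stopping time with 𝔼_x τ < ∞ for every x ∈ 𝐗, and let μ be a finite nonzero P-invariant borelian measure on 𝐗. Then S*μ is a finite nonzero Q-invariant measure on 𝐗, S*μ is absolutely continuous with respect to μ, and R*S*μ = μ. -/

import Mathlib

open MeasureTheory Filter Set Topology
open scoped ENNReal NNReal ENat

noncomputable section

/-- The shift on path space. -/
def pshift {X : Type*} (ω : ℕ → X) : ℕ → X := fun n => ω (n + 1)

/-- The natural filtration on path space: the σ-algebra generated by the first `n+1`
coordinates. -/
def pathFiltration (X : Type*) [MeasurableSpace X] (n : ℕ) : MeasurableSpace (ℕ → X) :=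
  MeasurableSpace.comap (fun ω (i : Fin (n + 1)) => ω (i : ℕ)) inferInstance

/-- A Markov chain on `X`, given by the family of its path-space laws `ℙ_x`. -/
structure MarkovChain (X : Type*) [MeasurableSpace X] where
  law : X → Measure (ℕ → X)
  prob : ∀ x, IsProbabilityMeasure (law x)
  meas_law : Measurable law
  start : ∀ x, (law x).map (fun ω => ω 0) = Measure.dirac x
  markov : ∀ (x : X) (n : ℕ) (A : Set (ℕ → X)),
      MeasurableSet[pathFiltration X n] A → ∀ g : (ℕ → X) → ℝ≥0∞, Measurable g →
      ∫⁻ ω in A, g (fun k => ω (k + n)) ∂law x = ∫⁻ ω in A, ∫⁻ η, g η ∂law (ω n) ∂law x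

variable {X : Type*} [MeasurableSpace X]

/-- A stopping time on path space, with values in `ℕ∞`. -/
def IsPathStoppingTime (τ : (ℕ → X) → ℕ∞) : Prop :=
  ∀ n : ℕ, MeasurableSet[pathFiltration X n] {ω | τ ω = (n : ℕ∞)}

/-- `τ` is θ-compatible: `ℙ_x(τ = 0) = 0` and, almost everywhere, `τ ≥ 2` implies
`τ ∘ θ = τ - 1`. -/
def ThetaCompatible (M : MarkovChain X) (τ : (ℕ → X) → ℕ∞) : Prop :=
  (∀ x, M.law x {ω | τ ω = 0} = 0) ∧
    ∀ x, ∀ᵐ ω ∂M.law x, 2 ≤ τ ω → τ (pshift ω) = τ ω - 1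

/-- The Markov operator `P` on nonnegative functions: `Pf(x) = 𝔼_x f(X_1)`. -/
def Pop (M : MarkovChain X) (f : X → ℝ≥0∞) (x : X) : ℝ≥0∞ := ∫⁻ ω, f (ω 1) ∂M.law x

/-- The induced operator `Q`: `Qg(x) = ∫_{τ<∞} g(X_τ) dℙ_x`. -/
def Qop (M : MarkovChain X) (τ : (ℕ → X) → ℕ∞) (g : X → ℝ≥0∞) (x : X) : ℝ≥0∞ :=
  ∫⁻ ω in {ω | τ ω ≠ ⊤}, g (ω (τ ω).toNat) ∂M.law x

/-- The operator `S`: `Sf(x) = ∫_{τ=1} f(X_1) dℙ_x`. -/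
def Sop (M : MarkovChain X) (τ : (ℕ → X) → ℕ∞) (f : X → ℝ≥0∞) (x : X) : ℝ≥0∞ :=
  ∫⁻ ω in {ω | τ ω = 1}, f (ω 1) ∂M.law x

/-- The operator `R`: `Rf(x) = ∫_{τ<∞} (f(X_0) + ⋯ + f(X_{τ-1})) dℙ_x`. -/
def Rop (M : MarkovChain X) (τ : (ℕ → X) → ℕ∞) (f : X → ℝ≥0∞) (x : X) : ℝ≥0∞ :=
  ∫⁻ ω in {ω | τ ω ≠ ⊤}, ∑ k ∈ Finset.range (τ ω).toNat, f (ω k) ∂M.law x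

/-- `𝔼_x τ`, with values in `[0,∞]`. -/
def EtauE (M : MarkovChain X) (τ : (ℕ → X) → ℕ∞) (x : X) : ℝ≥0∞ :=
  ∫⁻ ω, (τ ω : ℝ≥0∞) ∂M.law x

/-- `μ` is `P`-invariant: `∫ Pf dμ = ∫ f dμ` for every bounded nonnegative borelian `f`. -/
def PInvariant (M : MarkovChain X) (μ : Measure X) : Prop :=
  ∀ f : X → ℝ≥0∞, Measurable f → (∃ C : ℝ≥0∞, C ≠ ⊤ ∧ ∀ x, f x ≤ C) →
    ∫⁻ x, Pop M f x ∂μ = ∫⁻ x, f x ∂μ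

/-- `ν` is `Q`-invariant: `∫ Qf dν = ∫ f dν` for every bounded nonnegative borelian `f`. -/
def QInvariant (M : MarkovChain X) (τ : (ℕ → X) → ℕ∞) (ν : Measure X) : Prop :=
  ∀ f : X → ℝ≥0∞, Measurable f → (∃ C : ℝ≥0∞, C ≠ ⊤ ∧ ∀ x, f x ≤ C) →
    ∫⁻ x, Qop M τ f x ∂ν = ∫⁻ x, f x ∂ν

/-- `ν = S*μ`, i.e. `ν(A) = ∫ S𝟙_A dμ` for every borelian `A`. -/
def SstarEq (M : MarkovChain X) (τ : (ℕ → X) → ℕ∞) (μ ν : Measure X) : Prop :=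
  ∀ A : Set X, MeasurableSet A → ν A = ∫⁻ x, Sop M τ (A.indicator 1) x ∂μ

/-- `m = R*ν`, i.e. `m(A) = ∫ R𝟙_A dν` for every borelian `A`. -/
def RstarEq (M : MarkovChain X) (τ : (ℕ → X) → ℕ∞) (ν m : Measure X) : Prop :=
  ∀ A : Set X, MeasurableSet A → m A = ∫⁻ x, Rop M τ (A.indicator 1) x ∂ν

/-- the real-valued Markov operator -/
def Pr (M : MarkovChain X) (f : X → ℝ) (x : X) : ℝ := ∫ ω, f (ω 1) ∂M.law x

/-- the real-valued induced operator -/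
def Qr (M : MarkovChain X) (τ : (ℕ → X) → ℕ∞) (g : X → ℝ) (x : X) : ℝ :=
  ∫ ω in {ω | τ ω ≠ ⊤}, g (ω (τ ω).toNat) ∂M.law x

/-- the real-valued operator `S` -/
def Sr (M : MarkovChain X) (τ : (ℕ → X) → ℕ∞) (f : X → ℝ) (x : X) : ℝ :=
  ∫ ω in {ω | τ ω = 1}, f (ω 1) ∂M.law x

/-- the real-valued operator `R` -/
def Rr (M : MarkovChain X) (τ : (ℕ → X) → ℕ∞) (f : X → ℝ) (x : X) : ℝ :=
  ∫ ω in {ω | τ ω ≠ ⊤}, ∑ k ∈ Finset.range (τ ω).toNat, f (ω k) ∂M.law x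

/-- `𝔼_x τ` as a real number. -/
def Etau (M : MarkovChain X) (τ : (ℕ → X) → ℕ∞) (x : X) : ℝ := (EtauE M τ x).toReal

/-- `B_u = sup (Pu - u) + 1`. -/
def Bu (M : MarkovChain X) (u : X → ℝ) : ℝ :=
  sSup (Set.range fun x => Pr M u x - u x) + 1

/-- the weight `u - Pu + B_u` defining the space `𝓔_u`. -/
def wE (M : MarkovChain X) (u : X → ℝ) : X → ℝ := fun x => u x - Pr M u x + Bu M u

/-- `u` is a drift function: `u ≥ 1`, `u - Pu` is bounded below and, with
`B_u = sup (Pu - u) + 1`, the functions `Qu`, `𝔼τ/u` and `P(u-Pu+B_u)/(u-Pu+B_u)` are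
bounded. -/
structure IsDrift (M : MarkovChain X) (τ : (ℕ → X) → ℕ∞) (u : X → ℝ) : Prop where
  meas : Measurable u
  one_le : ∀ x, 1 ≤ u x
  int_one : ∀ x, Integrable (fun ω => u (ω 1)) (M.law x)
  bdd : BddAbove (Set.range fun x => Pr M u x - u x)
  etau_ne_top : ∀ x, EtauE M τ x ≠ ⊤
  qu_bdd : ∃ C : ℝ, ∀ x, Qr M τ u x ≤ C
  etau_div_bdd : ∃ C : ℝ, ∀ x, Etau M τ x ≤ C * u x
  pw_bdd : ∃ C : ℝ, ∀ x, Pr M (wE M u) x ≤ C * wE M u x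

/-- membership in the weighted space `𝓕^p_v` : `f` is borelian and `|f| ≤ C v^{1/p}`. -/
def MemWp (v : X → ℝ) (p : ℝ) (f : X → ℝ) : Prop :=
  Measurable f ∧ ∃ C : ℝ, ∀ x, |f x| ≤ C * v x ^ (1 / p)

/-- the norm of the weighted space `𝓕^p_v` : `‖f‖ = sup_x |f(x)|/v(x)^{1/p}`. -/
def normWp (v : X → ℝ) (p : ℝ) (f : X → ℝ) : ℝ := ⨆ x, |f x| / v x ^ (1 / p)

/-- ergodicity among a class of invariant measures: a finite nonzero invariant measure is
ergodic if it is not a nontrivial convex combination of two distinct invariant probability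
measures. -/
def ErgodicAmong (Inv : Measure X → Prop) (μ : Measure X) : Prop :=
  μ ≠ 0 ∧ ∀ (ν₁ ν₂ : Measure X) (t : ℝ≥0∞), Inv ν₁ → Inv ν₂ →
    IsProbabilityMeasure ν₁ → IsProbabilityMeasure ν₂ → 0 < t → t < 1 →
    μ = μ Set.univ • (t • ν₁ + (1 - t) • ν₂) → ν₁ = ν₂


section AuxLemmas

variable {X : Type*} [MeasurableSpace X]

lemma pathFiltration_le_pi (n : ℕ) :
    pathFiltration X n ≤ (inferInstance : MeasurableSpace (ℕ → X)) := by
  intro A hA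
  obtain ⟨B, hB, rfl⟩ := hA
  exact (measurable_pi_lambda _ fun i => measurable_pi_apply _) hB

lemma pathFiltration_mono {m n : ℕ} (h : m ≤ n) :
    pathFiltration X m ≤ pathFiltration X n := by
  intro A hA
  obtain ⟨B, hB, rfl⟩ := hA
  refine ⟨(fun g (i : Fin (m + 1)) => g (Fin.castLE (by omega) i)) ⁻¹' B,
    (measurable_pi_lambda _ fun i => measurable_pi_apply _) hB, rfl⟩

variable (τ : (ℕ → X) → ℕ∞)

lemma two_le_enat_iff (t : ℕ∞) : 2 ≤ t ↔ ¬(t = 0 ∨ t = 1) := by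
  induction t using ENat.recTopCoe with
  | top => simp
  | coe n =>
    push_neg
    rw [show (2 : ℕ∞) = ((2 : ℕ) : ℕ∞) by norm_cast, Nat.cast_le,
      show (0 : ℕ∞) = ((0 : ℕ) : ℕ∞) by norm_cast,
      show (1 : ℕ∞) = ((1 : ℕ) : ℕ∞) by norm_cast, Ne, Ne, Nat.cast_inj, Nat.cast_inj]
    omega

variable {τ}

lemma stf_one (hst : IsPathStoppingTime τ) :
    MeasurableSet[pathFiltration X 1] {ω | τ ω = 1} := by
  have := hst 1
  simpa using this

lemma stf_two (hst : IsPathStoppingTime τ) :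
    MeasurableSet[pathFiltration X 1] {ω | 2 ≤ τ ω} := by
  have h0 : MeasurableSet[pathFiltration X 1] {ω | τ ω = 0} := by
    have := pathFiltration_mono (X := X) (zero_le_one) _ (hst 0)
    simpa using this
  have h1 := stf_one hst
  have : {ω : ℕ → X | 2 ≤ τ ω} = ({ω | τ ω = 0} ∪ {ω | τ ω = 1})ᶜ := by
    ext ω
    simp [two_le_enat_iff]
  rw [this]
  exact (h0.union h1).compl

lemma mset_tau_eq (hst : IsPathStoppingTime τ) (n : ℕ) :
    MeasurableSet {ω | τ ω = (n : ℕ∞)} :=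
  pathFiltration_le_pi n _ (hst n)

lemma mset_tau_one (hst : IsPathStoppingTime τ) : MeasurableSet {ω | τ ω = 1} :=
  pathFiltration_le_pi 1 _ (stf_one hst)

lemma mset_tau_two (hst : IsPathStoppingTime τ) : MeasurableSet {ω | 2 ≤ τ ω} :=
  pathFiltration_le_pi 1 _ (stf_two hst)

lemma mset_tau_top (hst : IsPathStoppingTime τ) : MeasurableSet {ω | τ ω = ⊤} := by
  have : {ω : ℕ → X | τ ω = ⊤} = (⋃ n : ℕ, {ω | τ ω = (n : ℕ∞)})ᶜ := by
    ext ω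
    simp only [Set.mem_compl_iff, Set.mem_iUnion, Set.mem_setOf_eq, not_exists]
    induction (τ ω) using ENat.recTopCoe with
    | top => simp
    | coe n =>
      simp only [ENat.coe_ne_top, false_iff, not_forall, not_not]
      exact ⟨n, rfl⟩
  rw [this]
  exact (MeasurableSet.iUnion fun n => mset_tau_eq hst n).compl

lemma mset_tau_ne_top (hst : IsPathStoppingTime τ) : MeasurableSet {ω | τ ω ≠ ⊤} :=
  (mset_tau_top hst).compl

end AuxLemmas
section AuxOps

variable {X : Type*} [MeasurableSpace X]

/-- the operator `T`: integral over `{τ ≥ 2}` of `g(X₁)`. -/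
def TopOp (M : MarkovChain X) (τ : (ℕ → X) → ℕ∞) (g : X → ℝ≥0∞) (x : X) : ℝ≥0∞ :=
  ∫⁻ ω in {ω | 2 ≤ τ ω}, g (ω 1) ∂M.law x

/-- integrand computing `g(X_τ)` on `{τ < ∞}`. -/
def qInt (τ : (ℕ → X) → ℕ∞) (f : X → ℝ≥0∞) (ω : ℕ → X) : ℝ≥0∞ :=
  ∑' n : ℕ, ({ω | τ ω = (n : ℕ∞)}).indicator (fun ω => f (ω n)) ω

/-- integrand computing the truncated Birkhoff sum. -/
def rInt (τ : (ℕ → X) → ℕ∞) (N : ℕ) (f : X → ℝ≥0∞) (ω : ℕ → X) : ℝ≥0∞ :=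
  ∑ k ∈ Finset.range N, ({ω | (k : ℕ∞) < τ ω}).indicator (fun ω => f (ω k)) ω

/-- truncated `R` operator. -/
def RNop (M : MarkovChain X) (τ : (ℕ → X) → ℕ∞) (N : ℕ) (f : X → ℝ≥0∞) (x : X) : ℝ≥0∞ :=
  ∫⁻ ω, rInt τ N f ω ∂M.law x

variable {M : MarkovChain X} {τ : (ℕ → X) → ℕ∞}

lemma mset_tau_lt (hst : IsPathStoppingTime τ) (k : ℕ) :
    MeasurableSet {ω | (k : ℕ∞) < τ ω} := by
  have : {ω : ℕ → X | (k : ℕ∞) < τ ω} = (⋃ n ∈ Finset.range (k + 1), {ω | τ ω = (n : ℕ∞)})ᶜ := by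
    ext ω
    simp only [Set.mem_compl_iff, Set.mem_iUnion, Set.mem_setOf_eq, not_exists,
      Finset.mem_range]
    induction (τ ω) using ENat.recTopCoe with
    | top => simp [lt_irrefl]
    | coe n =>
      rw [Nat.cast_lt]
      constructor
      · intro h m hm hnm
        rw [Nat.cast_inj] at hnm
        omega
      · intro h
        by_contra hk
        exact h n (by omega) rfl
  rw [this]
  exact (MeasurableSet.biUnion (Set.to_countable _) fun n _ => mset_tau_eq hst n).compl

lemma meas_qInt (hst : IsPathStoppingTime τ) {f : X → ℝ≥0∞} (hf : Measurable f) :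
    Measurable (qInt τ f) :=
  Measurable.ennreal_tsum fun n =>
    (hf.comp (measurable_pi_apply n)).indicator (mset_tau_eq hst n)

lemma meas_rInt (hst : IsPathStoppingTime τ) {f : X → ℝ≥0∞} (hf : Measurable f) (N : ℕ) :
    Measurable (rInt τ N f) :=
  Finset.measurable_sum _ fun k _ =>
    (hf.comp (measurable_pi_apply k)).indicator (mset_tau_lt hst k)

lemma meas_lint {g : (ℕ → X) → ℝ≥0∞} (hg : Measurable g) :
    Measurable fun x => ∫⁻ ω, g ω ∂M.law x :=
  (Measure.measurable_lintegral hg).comp M.meas_law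

lemma meas_setlint {g : (ℕ → X) → ℝ≥0∞} (hg : Measurable g) {A : Set (ℕ → X)}
    (hA : MeasurableSet A) : Measurable fun x => ∫⁻ ω in A, g ω ∂M.law x := by
  simp_rw [← lintegral_indicator hA]
  exact meas_lint (hg.indicator hA)

lemma meas_Pop {f : X → ℝ≥0∞} (hf : Measurable f) : Measurable (Pop M f) :=
  meas_lint (hf.comp (measurable_pi_apply 1))

lemma meas_Sop (hst : IsPathStoppingTime τ) {f : X → ℝ≥0∞} (hf : Measurable f) :
    Measurable (Sop M τ f) :=
  meas_setlint (hf.comp (measurable_pi_apply 1)) (mset_tau_one hst)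

lemma meas_TopOp (hst : IsPathStoppingTime τ) {f : X → ℝ≥0∞} (hf : Measurable f) :
    Measurable (TopOp M τ f) :=
  meas_setlint (hf.comp (measurable_pi_apply 1)) (mset_tau_two hst)

lemma qop_eq (hst : IsPathStoppingTime τ) {f : X → ℝ≥0∞} (x : X) :
    Qop M τ f x = ∫⁻ ω, qInt τ f ω ∂M.law x := by
  rw [Qop, ← lintegral_indicator (mset_tau_ne_top hst)]
  refine lintegral_congr fun ω => ?_
  rcases eq_or_ne (τ ω) ⊤ with h | h
  · rw [Set.indicator_of_notMem (by simp [h]), qInt]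
    symm
    rw [ENNReal.tsum_eq_zero]
    intro n
    exact Set.indicator_of_notMem (by simp [h]) _
  · rw [Set.indicator_of_mem (show ω ∈ {ω | τ ω ≠ ⊤} from h), qInt]
    obtain ⟨n, hn⟩ : ∃ n : ℕ, τ ω = (n : ℕ∞) := ⟨(τ ω).toNat, (ENat.coe_toNat h).symm⟩
    symm
    rw [tsum_eq_single n]
    · rw [Set.indicator_of_mem (show ω ∈ {ω | τ ω = (n : ℕ∞)} from hn), hn, ENat.toNat_coe]
    · intro m hm
      refine Set.indicator_of_notMem ?_ _
      simp only [Set.mem_setOf_eq, hn, Nat.cast_inj]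
      exact fun h' => hm h'.symm

lemma meas_Qop (hst : IsPathStoppingTime τ) {f : X → ℝ≥0∞} (hf : Measurable f) :
    Measurable (Qop M τ f) := by
  have : Qop M τ f = fun x => ∫⁻ ω, qInt τ f ω ∂M.law x := funext fun x => qop_eq hst x
  rw [this]
  exact meas_lint (meas_qInt hst hf)

lemma meas_RNop (hst : IsPathStoppingTime τ) {f : X → ℝ≥0∞} (hf : Measurable f) (N : ℕ) :
    Measurable (RNop M τ N f) :=
  meas_lint (meas_rInt hst hf N)

/-- splitting the path space into `{τ = 1}` and `{τ ≥ 2}` (up to the null set `{τ = 0}`). -/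
lemma split3 (hst : IsPathStoppingTime τ) (hθ : ThetaCompatible M τ)
    {g : (ℕ → X) → ℝ≥0∞} (x : X) :
    ∫⁻ ω, g ω ∂M.law x
      = ∫⁻ ω in {ω | τ ω = 1}, g ω ∂M.law x + ∫⁻ ω in {ω | 2 ≤ τ ω}, g ω ∂M.law x := by
  have h0 : MeasurableSet {ω : ℕ → X | τ ω = 0} := by
    have := mset_tau_eq hst 0; simpa using this
  have hcompl : {ω : ℕ → X | τ ω = 0}ᶜ = {ω | τ ω = 1} ∪ {ω | 2 ≤ τ ω} := by
    ext ω
    simp only [Set.mem_compl_iff, Set.mem_setOf_eq, Set.mem_union]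
    rw [two_le_enat_iff]
    constructor
    · intro h
      by_cases h1 : τ ω = 1
      · exact Or.inl h1
      · exact Or.inr (by tauto)
    · rintro (h | h)
      · rw [h]; exact one_ne_zero
      · tauto
  have hdisj : Disjoint {ω : ℕ → X | τ ω = 1} {ω | 2 ≤ τ ω} := by
    rw [Set.disjoint_left]
    intro ω h1 h2
    rw [Set.mem_setOf_eq, two_le_enat_iff] at *
    exact h2 (Or.inr h1)
  rw [← lintegral_add_compl g h0, setLIntegral_measure_zero _ _ (hθ.1 x), zero_add, hcompl,
    lintegral_union (mset_tau_two hst) hdisj]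

/-- the Markov property at time 1. -/
lemma markov1 {A : Set (ℕ → X)} (hA : MeasurableSet[pathFiltration X 1] A)
    {g : (ℕ → X) → ℝ≥0∞} (hg : Measurable g) (x : X) :
    ∫⁻ ω in A, g (pshift ω) ∂M.law x = ∫⁻ ω in A, ∫⁻ η, g η ∂M.law (ω 1) ∂M.law x :=
  M.markov x 1 A hA g hg

lemma first_coord {f : X → ℝ≥0∞} (hf : Measurable f) (x : X) :
    ∫⁻ ω, f (ω 0) ∂M.law x = f x := by
  calc ∫⁻ ω, f (ω 0) ∂M.law x
      = ∫⁻ y, f y ∂((M.law x).map (fun ω => ω 0)) :=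
        (lintegral_map hf (measurable_pi_apply 0)).symm
    _ = ∫⁻ y, f y ∂(Measure.dirac x) := by rw [M.start x]
    _ = f x := lintegral_dirac' x hf

end AuxOps
section AuxIdent

variable {X : Type*} [MeasurableSpace X] {M : MarkovChain X} {τ : (ℕ → X) → ℕ∞}

lemma law_tau_top (hst : IsPathStoppingTime τ) (hτ : ∀ x, EtauE M τ x ≠ ⊤) (x : X) :
    M.law x {ω | τ ω = ⊤} = 0 := by
  by_contra h
  apply hτ x
  have hle : ⊤ * M.law x {ω | τ ω = ⊤} ≤ EtauE M τ x := by
    rw [← setLIntegral_const {ω | τ ω = ⊤} ⊤, ← lintegral_indicator (mset_tau_top hst)]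
    refine lintegral_mono fun ω => ?_
    rcases Classical.em (ω ∈ {ω | τ ω = ⊤}) with hm | hm
    · rw [Set.indicator_of_mem hm]
      rw [Set.mem_setOf_eq] at hm
      simp [hm]
    · rw [Set.indicator_of_notMem hm]
      exact zero_le
  rw [ENNReal.top_mul h] at hle
  exact top_le_iff.mp hle

/-- bounds -/
lemma qop_le (hst : IsPathStoppingTime τ) {f : X → ℝ≥0∞} {C : ℝ≥0∞} (hfC : ∀ y, f y ≤ C)
    (x : X) : Qop M τ f x ≤ C := by
  haveI := M.prob x
  calc Qop M τ f x ≤ ∫⁻ _ in {ω | τ ω ≠ ⊤}, C ∂M.law x := lintegral_mono fun ω => hfC _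
    _ = C * M.law x {ω | τ ω ≠ ⊤} := setLIntegral_const _ _
    _ ≤ C * 1 := mul_le_mul_right prob_le_one _
    _ = C := mul_one _

lemma topOp_le {f : X → ℝ≥0∞} {C : ℝ≥0∞} (hfC : ∀ y, f y ≤ C) (x : X) :
    TopOp M τ f x ≤ C := by
  haveI := M.prob x
  calc TopOp M τ f x ≤ ∫⁻ _ in {ω | 2 ≤ τ ω}, C ∂M.law x := lintegral_mono fun ω => hfC _
    _ = C * M.law x {ω | 2 ≤ τ ω} := setLIntegral_const _ _
    _ ≤ C * 1 := mul_le_mul_right prob_le_one _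
    _ = C := mul_one _

lemma sop_le {f : X → ℝ≥0∞} {C : ℝ≥0∞} (hfC : ∀ y, f y ≤ C) (x : X) :
    Sop M τ f x ≤ C := by
  haveI := M.prob x
  calc Sop M τ f x ≤ ∫⁻ _ in {ω | τ ω = 1}, C ∂M.law x := lintegral_mono fun ω => hfC _
    _ = C * M.law x {ω | τ ω = 1} := setLIntegral_const _ _
    _ ≤ C * 1 := mul_le_mul_right prob_le_one _
    _ = C := mul_one _

lemma sop_le_pop (f : X → ℝ≥0∞) (x : X) : Sop M τ f x ≤ Pop M f x := by
  rw [Sop, Pop]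
  exact setLIntegral_le_lintegral _ _

lemma rInt_le_of_le {f : X → ℝ≥0∞} {C : ℝ≥0∞} (hfC : ∀ y, f y ≤ C) (N : ℕ) (ω : ℕ → X) :
    rInt τ N f ω ≤ N * C := by
  calc rInt τ N f ω ≤ ∑ k ∈ Finset.range N, C := by
        refine Finset.sum_le_sum fun k _ => ?_
        exact (Set.indicator_le_self _ _ ω).trans (hfC _)
    _ = N * C := by rw [Finset.sum_const, Finset.card_range, nsmul_eq_mul]

lemma rInt_le_tau {f : X → ℝ≥0∞} (hf1 : ∀ y, f y ≤ 1) (N : ℕ) (ω : ℕ → X) :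
    rInt τ N f ω ≤ (τ ω : ℝ≥0∞) := by
  rcases eq_or_ne (τ ω) ⊤ with h | h
  · rw [h, ENat.toENNReal_top]
    exact le_top
  obtain ⟨n, hn⟩ : ∃ n : ℕ, τ ω = (n : ℕ∞) := ⟨(τ ω).toNat, (ENat.coe_toNat h).symm⟩
  rw [hn, ENat.toENNReal_coe]
  calc rInt τ N f ω
      ≤ ∑ k ∈ Finset.range n, ({ω | (k : ℕ∞) < τ ω}).indicator (fun ω => f (ω k)) ω := by
        refine Finset.sum_le_sum_of_ne_zero fun k _ hk => ?_
        rw [Finset.mem_range]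
        by_contra hkn
        apply hk
        refine Set.indicator_of_notMem ?_ _
        rw [Set.mem_setOf_eq, hn, Nat.cast_lt]
        omega
    _ ≤ ∑ k ∈ Finset.range n, 1 := by
        refine Finset.sum_le_sum fun k _ => ?_
        exact (Set.indicator_le_self _ _ ω).trans (hf1 _)
    _ = (n : ℝ≥0∞) := by rw [Finset.sum_const, Finset.card_range, nsmul_eq_mul, mul_one]

lemma rInt_mono {f : X → ℝ≥0∞} : Monotone fun N => rInt τ N f := by
  intro N N' h ω
  exact Finset.sum_le_sum_of_subset (Finset.range_subset_range.mpr h)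

lemma RNop_mono {f : X → ℝ≥0∞} : Monotone fun N => RNop M τ N f := by
  intro N N' h x
  exact lintegral_mono fun ω => rInt_mono h ω

lemma RNop_zero (f : X → ℝ≥0∞) (x : X) : RNop M τ 0 f x = 0 := by
  simp [RNop, rInt]

/-- on `{τ ≠ ⊤}`, the truncated sums converge to the full Birkhoff sum. -/
lemma iSup_rInt {f : X → ℝ≥0∞} {ω : ℕ → X} (h : τ ω ≠ ⊤) :
    ⨆ N, rInt τ N f ω = ∑ k ∈ Finset.range (τ ω).toNat, f (ω k) := by
  obtain ⟨n, hn⟩ : ∃ n : ℕ, τ ω = (n : ℕ∞) := ⟨(τ ω).toNat, (ENat.coe_toNat h).symm⟩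
  have htn : (τ ω).toNat = n := by rw [hn, ENat.toNat_coe]
  rw [htn]
  have hval : rInt τ n f ω = ∑ k ∈ Finset.range n, f (ω k) := by
    refine Finset.sum_congr rfl fun k hk => ?_
    rw [Finset.mem_range] at hk
    refine Set.indicator_of_mem ?_ _
    rw [Set.mem_setOf_eq, hn, Nat.cast_lt]
    exact hk
  refine le_antisymm (iSup_le fun N => ?_) (le_iSup_of_le n hval.ge)
  calc rInt τ N f ω
      ≤ ∑ k ∈ Finset.range n, ({ω | (k : ℕ∞) < τ ω}).indicator (fun ω => f (ω k)) ω := by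
        refine Finset.sum_le_sum_of_ne_zero fun k _ hk => ?_
        rw [Finset.mem_range]
        by_contra hkn
        apply hk
        refine Set.indicator_of_notMem ?_ _
        rw [Set.mem_setOf_eq, hn, Nat.cast_lt]
        omega
    _ = ∑ k ∈ Finset.range n, f (ω k) := hval ▸ rfl

lemma rop_eq_iSup (hst : IsPathStoppingTime τ) (hτ : ∀ x, EtauE M τ x ≠ ⊤)
    {f : X → ℝ≥0∞} (hf : Measurable f) (x : X) :
    Rop M τ f x = ⨆ N, RNop M τ N f x := by
  rw [show (⨆ N, RNop M τ N f x) = ∫⁻ ω, ⨆ N, rInt τ N f ω ∂M.law x from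
    (lintegral_iSup (fun N => meas_rInt hst hf N) (fun N N' h ω => rInt_mono h ω)).symm]
  rw [Rop]
  have hnull : M.law x {ω | τ ω = ⊤} = 0 := law_tau_top hst hτ x
  have hcompl : {ω : ℕ → X | τ ω ≠ ⊤} = {ω | τ ω = ⊤}ᶜ := rfl
  rw [← lintegral_add_compl (fun ω => ⨆ N, rInt τ N f ω) (mset_tau_top hst),
    setLIntegral_measure_zero _ _ hnull, zero_add, ← hcompl]
  exact (setLIntegral_congr_fun_ae (mset_tau_ne_top hst)
    (Filter.Eventually.of_forall fun ω hω => (iSup_rInt hω))).symm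

end AuxIdent
section AuxKey

variable {X : Type*} [MeasurableSpace X] {M : MarkovChain X} {τ : (ℕ → X) → ℕ∞}

lemma measurable_pshift : Measurable (pshift : (ℕ → X) → (ℕ → X)) :=
  measurable_pi_lambda _ fun i => measurable_pi_apply _

lemma pop_split (hst : IsPathStoppingTime τ) (hθ : ThetaCompatible M τ)
    (g : X → ℝ≥0∞) (x : X) :
    Pop M g x = Sop M τ g x + TopOp M τ g x :=
  split3 hst hθ x

/-- the fundamental identity `Q f = S f + T (Q f)`. -/
lemma qop_identity (hst : IsPathStoppingTime τ) (hθ : ThetaCompatible M τ)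
    {f : X → ℝ≥0∞} (hf : Measurable f) (x : X) :
    Qop M τ f x = Sop M τ f x + TopOp M τ (Qop M τ f) x := by
  rw [qop_eq hst, split3 hst hθ x]
  congr 1
  · -- on {τ = 1}
    refine setLIntegral_congr_fun_ae (mset_tau_one hst)
      (Filter.Eventually.of_forall fun ω hω => ?_)
    rw [Set.mem_setOf_eq] at hω
    rw [qInt, tsum_eq_single 1]
    · rw [Set.indicator_of_mem (show ω ∈ {ω | τ ω = ((1:ℕ) : ℕ∞)} by simp [hω])]
    · intro m hm
      refine Set.indicator_of_notMem ?_ _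
      rw [Set.mem_setOf_eq, hω]
      intro h
      apply hm
      have : ((1:ℕ) : ℕ∞) = (m : ℕ∞) := by rw [← h]; norm_cast
      exact (by exact_mod_cast this : 1 = m).symm
  · -- on {2 ≤ τ}
    have key : ∀ᵐ ω ∂M.law x, ω ∈ {ω | 2 ≤ τ ω} → qInt τ f ω = qInt τ f (pshift ω) := by
      filter_upwards [hθ.2 x] with ω hω hmem
      have hs : τ (pshift ω) = τ ω - 1 := hω hmem
      rcases eq_or_ne (τ ω) ⊤ with h | h
      · have hs' : τ (pshift ω) = ⊤ := by rw [hs, h, ENat.top_sub_one]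
        rw [qInt, qInt, ENNReal.tsum_eq_zero.mpr, ENNReal.tsum_eq_zero.mpr]
        · intro n; exact Set.indicator_of_notMem (by simp [hs']) _
        · intro n; exact Set.indicator_of_notMem (by simp [h]) _
      · obtain ⟨n, hn⟩ : ∃ n : ℕ, τ ω = (n : ℕ∞) := ⟨(τ ω).toNat, (ENat.coe_toNat h).symm⟩
        have hn2 : 2 ≤ n := by
          rw [hn] at hmem
          exact_mod_cast hmem
        have hs' : τ (pshift ω) = ((n - 1 : ℕ) : ℕ∞) := by
          rw [hs, hn, ENat.coe_sub, Nat.cast_one]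
        rw [qInt, qInt, tsum_eq_single n, tsum_eq_single (n - 1)]
        · rw [Set.indicator_of_mem (show ω ∈ {ω | τ ω = (n : ℕ∞)} from hn),
            Set.indicator_of_mem (show pshift ω ∈ {ω | τ ω = ((n - 1 : ℕ) : ℕ∞)} from hs')]
          show f (ω n) = f (ω (n - 1 + 1))
          congr 2
          omega
        · intro m hm
          refine Set.indicator_of_notMem ?_ _
          rw [Set.mem_setOf_eq, hs', Nat.cast_inj]
          exact fun h' => hm h'.symm
        · intro m hm
          refine Set.indicator_of_notMem ?_ _
          rw [Set.mem_setOf_eq, hn, Nat.cast_inj]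
          exact fun h' => hm h'.symm
    calc ∫⁻ ω in {ω | 2 ≤ τ ω}, qInt τ f ω ∂M.law x
        = ∫⁻ ω in {ω | 2 ≤ τ ω}, qInt τ f (pshift ω) ∂M.law x :=
          setLIntegral_congr_fun_ae (mset_tau_two hst) key
      _ = ∫⁻ ω in {ω | 2 ≤ τ ω}, ∫⁻ η, qInt τ f η ∂M.law (ω 1) ∂M.law x :=
          markov1 (stf_two hst) (meas_qInt hst hf) x
      _ = TopOp M τ (Qop M τ f) x := by
          refine setLIntegral_congr_fun_ae (mset_tau_two hst)
            (Filter.Eventually.of_forall fun ω _ => ?_)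
          exact (qop_eq hst (ω 1)).symm

/-- the fundamental identity `R_{N+1} f = f + T (R_N f)`. -/
lemma rN_identity (hst : IsPathStoppingTime τ) (hθ : ThetaCompatible M τ)
    {f : X → ℝ≥0∞} (hf : Measurable f) (N : ℕ) (x : X) :
    RNop M τ (N + 1) f x = f x + TopOp M τ (RNop M τ N f) x := by
  have key : ∀ᵐ ω ∂M.law x, ω ∈ {ω | 2 ≤ τ ω} →
      rInt τ (N + 1) f ω = f (ω 0) + rInt τ N f (pshift ω) := by
    filter_upwards [hθ.2 x] with ω hω hmem
    have hs : τ (pshift ω) = τ ω - 1 := hω hmem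
    rw [rInt, Finset.sum_range_succ']
    have h0 : ({ω | ((0:ℕ) : ℕ∞) < τ ω}).indicator (fun ω => f (ω 0)) ω = f (ω 0) := by
      refine Set.indicator_of_mem ?_ _
      rw [Set.mem_setOf_eq, Nat.cast_zero]
      exact lt_of_lt_of_le (by norm_num) hmem
    rw [h0, add_comm]
    congr 1
    refine Finset.sum_congr rfl fun k hk => ?_
    show ({ω | ((k+1 : ℕ) : ℕ∞) < τ ω}).indicator (fun ω => f (ω (k+1))) ω
      = ({ω | (k : ℕ∞) < τ ω}).indicator (fun ω => f (ω k)) (pshift ω)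
    have hcond : ((k+1 : ℕ) : ℕ∞) < τ ω ↔ (k : ℕ∞) < τ (pshift ω) := by
      rw [hs]
      rcases eq_or_ne (τ ω) ⊤ with h | h
      · rw [h, ENat.top_sub_one]
        exact iff_of_true (ENat.coe_lt_top _) (ENat.coe_lt_top _)
      · obtain ⟨n, hn⟩ : ∃ n : ℕ, τ ω = (n : ℕ∞) := ⟨(τ ω).toNat, (ENat.coe_toNat h).symm⟩
        have hn2 : 2 ≤ n := by rw [hn] at hmem; exact_mod_cast hmem
        rw [hn, ← Nat.cast_one (R := ℕ∞), ← ENat.coe_sub, Nat.cast_lt, Nat.cast_lt]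
        omega
    by_cases hc : ((k+1 : ℕ) : ℕ∞) < τ ω
    · rw [Set.indicator_of_mem (show ω ∈ {ω | ((k+1 : ℕ) : ℕ∞) < τ ω} from hc),
        Set.indicator_of_mem (show pshift ω ∈ {ω | (k : ℕ∞) < τ ω} from hcond.mp hc)]
      rfl
    · rw [Set.indicator_of_notMem (show ω ∉ {ω | ((k+1 : ℕ) : ℕ∞) < τ ω} from hc),
        Set.indicator_of_notMem
          (show pshift ω ∉ {ω | (k : ℕ∞) < τ ω} from fun hm => hc (hcond.mpr hm))]
  have h1 : ∀ ω ∈ {ω : ℕ → X | τ ω = 1}, rInt τ (N + 1) f ω = f (ω 0) := by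
    intro ω hω
    rw [Set.mem_setOf_eq] at hω
    rw [rInt, Finset.sum_eq_single 0]
    · refine Set.indicator_of_mem ?_ _
      rw [Set.mem_setOf_eq, Nat.cast_zero, hω]
      norm_num
    · intro k _ hk
      refine Set.indicator_of_notMem ?_ _
      rw [Set.mem_setOf_eq, hω]
      intro hlt
      have : (1 : ℕ∞) = ((1:ℕ) : ℕ∞) := by norm_cast
      rw [this, Nat.cast_lt] at hlt
      omega
    · intro h; exact absurd (Finset.mem_range.mpr (by omega)) h
  calc RNop M τ (N + 1) f x
      = ∫⁻ ω in {ω | τ ω = 1}, rInt τ (N+1) f ω ∂M.law x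
        + ∫⁻ ω in {ω | 2 ≤ τ ω}, rInt τ (N+1) f ω ∂M.law x := split3 hst hθ x
    _ = ∫⁻ ω in {ω | τ ω = 1}, f (ω 0) ∂M.law x
        + (∫⁻ ω in {ω | 2 ≤ τ ω}, f (ω 0) ∂M.law x
          + ∫⁻ ω in {ω | 2 ≤ τ ω}, rInt τ N f (pshift ω) ∂M.law x) := by
        congr 1
        · exact setLIntegral_congr_fun_ae (mset_tau_one hst) (Filter.Eventually.of_forall h1)
        · rw [setLIntegral_congr_fun_ae (mset_tau_two hst) key]
          exact lintegral_add_left (hf.comp (measurable_pi_apply 0)) _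
    _ = (∫⁻ ω in {ω | τ ω = 1}, f (ω 0) ∂M.law x
          + ∫⁻ ω in {ω | 2 ≤ τ ω}, f (ω 0) ∂M.law x)
        + ∫⁻ ω in {ω | 2 ≤ τ ω}, rInt τ N f (pshift ω) ∂M.law x := by ring
    _ = f x + TopOp M τ (RNop M τ N f) x := by
        congr 1
        · rw [← split3 hst hθ x, first_coord (hf := hf)]
        · rw [markov1 (stf_two hst) (meas_rInt hst hf N) x]
          rfl

end AuxKey
section AuxKernel

variable {X : Type*} [MeasurableSpace X]

/-- the kernel whose composition with `μ` gives `S*μ`. -/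
def Skernel (M : MarkovChain X) (τ : (ℕ → X) → ℕ∞) (x : X) : Measure X :=
  ((M.law x).restrict {ω | τ ω = 1}).map (fun ω => ω 1)

variable {M : MarkovChain X} {τ : (ℕ → X) → ℕ∞}

lemma Skernel_apply (hst : IsPathStoppingTime τ) (x : X) {s : Set X} (hs : MeasurableSet s) :
    Skernel M τ x s = M.law x ((fun ω => ω 1) ⁻¹' s ∩ {ω | τ ω = 1}) := by
  rw [Skernel, Measure.map_apply (measurable_pi_apply 1) hs,
    Measure.restrict_apply (measurable_pi_apply 1 hs)]

lemma measurable_Skernel (hst : IsPathStoppingTime τ) : Measurable (Skernel M τ) := by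
  apply Measure.measurable_of_measurable_coe
  intro s hs
  have : (fun x => Skernel M τ x s)
      = fun x => M.law x ((fun ω => ω 1) ⁻¹' s ∩ {ω | τ ω = 1}) :=
    funext fun x => Skernel_apply hst x hs
  rw [this]
  exact (Measure.measurable_coe ((measurable_pi_apply 1 hs).inter (mset_tau_one hst))).comp
    M.meas_law

lemma Skernel_lintegral (hst : IsPathStoppingTime τ) (x : X) {f : X → ℝ≥0∞}
    (hf : Measurable f) : ∫⁻ y, f y ∂Skernel M τ x = Sop M τ f x := by
  rw [Skernel, lintegral_map hf (measurable_pi_apply 1)]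
  rfl

/-- basic transfer: integrating against `ν := μ.bind (Skernel M τ)`. -/
lemma transfer (hst : IsPathStoppingTime τ) (μ : Measure X) {f : X → ℝ≥0∞}
    (hf : Measurable f) :
    ∫⁻ y, f y ∂(μ.bind (Skernel M τ)) = ∫⁻ x, Sop M τ f x ∂μ := by
  rw [Measure.lintegral_bind (measurable_Skernel hst).aemeasurable hf.aemeasurable]
  exact lintegral_congr fun x => Skernel_lintegral hst x hf

end AuxKernel
/-- Lemma 1.8: if `μ` is a finite nonzero `P`-invariant measure then `S*μ` is a finite
nonzero `Q`-invariant measure, absolutely continuous with respect to `μ`, and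
`R*S*μ = μ`. -/
theorem stmt2 [MetricSpace X] [CompleteSpace X] [TopologicalSpace.SeparableSpace X] [BorelSpace X]
    (M : MarkovChain X) (τ : (ℕ → X) → ℕ∞)
    (hst : IsPathStoppingTime τ) (hθ : ThetaCompatible M τ)
    (hτ : ∀ x, EtauE M τ x ≠ ⊤)
    (μ : Measure X) [IsFiniteMeasure μ] (hμ0 : μ ≠ 0) (hinv : PInvariant M μ) :
    ∃ ν : Measure X, SstarEq M τ μ ν ∧ IsFiniteMeasure ν ∧ ν ≠ 0 ∧
      QInvariant M τ ν ∧ ν ≪ μ ∧ RstarEq M τ ν μ := by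
  classical
  set ν : Measure X := μ.bind (Skernel M τ) with hνdef
  have hT : ∀ {f : X → ℝ≥0∞}, Measurable f → ∫⁻ y, f y ∂ν = ∫⁻ x, Sop M τ f x ∂μ :=
    fun hf => transfer hst μ hf
  have hind : ∀ {A : Set X}, MeasurableSet A → Measurable (A.indicator (1 : X → ℝ≥0∞)) :=
    fun hA => measurable_one.indicator hA
  have hind1 : ∀ (A : Set X) (y : X), A.indicator (1 : X → ℝ≥0∞) y ≤ 1 := by
    intro A y; by_cases h : y ∈ A <;> simp [h]
  have hSstar : SstarEq M τ μ ν := by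
    intro A hA
    rw [← lintegral_indicator_one hA, hT (hind hA)]
  have hle : ∀ A : Set X, MeasurableSet A → ν A ≤ μ A := by
    intro A hA
    calc ν A = ∫⁻ x, Sop M τ (A.indicator 1) x ∂μ := hSstar A hA
      _ ≤ ∫⁻ x, Pop M (A.indicator 1) x ∂μ := lintegral_mono fun x => sop_le_pop _ x
      _ = ∫⁻ x, A.indicator 1 x ∂μ := hinv _ (hind hA) ⟨1, ENNReal.one_ne_top, hind1 A⟩
      _ = μ A := lintegral_indicator_one hA
  have hfin : IsFiniteMeasure ν :=
    ⟨lt_of_le_of_lt (hle Set.univ MeasurableSet.univ) (measure_lt_top μ Set.univ)⟩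
  have hac : ν ≪ μ := Measure.AbsolutelyContinuous.mk fun s hs h0 =>
    le_antisymm ((hle s hs).trans h0.le) zero_le
  have hQinv : QInvariant M τ ν := by
    rintro f hf ⟨C, hC, hfC⟩
    have hQf : Measurable (Qop M τ f) := meas_Qop hst hf
    have hQfC : ∀ y, Qop M τ f y ≤ C := fun y => qop_le hst hfC y
    have hTfin : ∫⁻ x, TopOp M τ (Qop M τ f) x ∂μ ≠ ⊤ := by
      refine ne_of_lt (lt_of_le_of_lt (lintegral_mono fun x => topOp_le hQfC x) ?_)
      rw [lintegral_const]
      exact ENNReal.mul_lt_top hC.lt_top (measure_lt_top μ Set.univ)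
    have e1 : ∫⁻ x, Sop M τ (Qop M τ f) x ∂μ + ∫⁻ x, TopOp M τ (Qop M τ f) x ∂μ
        = ∫⁻ x, Sop M τ f x ∂μ + ∫⁻ x, TopOp M τ (Qop M τ f) x ∂μ := by
      rw [← lintegral_add_left (meas_Sop hst hQf), ← lintegral_add_left (meas_Sop hst hf)]
      calc ∫⁻ x, (Sop M τ (Qop M τ f) x + TopOp M τ (Qop M τ f) x) ∂μ
          = ∫⁻ x, Pop M (Qop M τ f) x ∂μ :=
            lintegral_congr fun x => (pop_split hst hθ _ x).symm
        _ = ∫⁻ x, Qop M τ f x ∂μ := hinv _ hQf ⟨C, hC, hQfC⟩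
        _ = ∫⁻ x, (Sop M τ f x + TopOp M τ (Qop M τ f) x) ∂μ :=
            lintegral_congr fun x => qop_identity hst hθ hf x
    have e2 : ∫⁻ x, Sop M τ (Qop M τ f) x ∂μ = ∫⁻ x, Sop M τ f x ∂μ :=
      (ENNReal.add_left_inj hTfin).mp e1
    calc ∫⁻ x, Qop M τ f x ∂ν = ∫⁻ x, Sop M τ (Qop M τ f) x ∂μ := hT hQf
      _ = ∫⁻ x, Sop M τ f x ∂μ := e2
      _ = ∫⁻ x, f x ∂ν := (hT hf).symm
  have hRstar : RstarEq M τ ν μ := by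
    intro A hA
    set f := A.indicator (1 : X → ℝ≥0∞) with hfdef
    have hf : Measurable f := hind hA
    have hf1 : ∀ y, f y ≤ 1 := hind1 A
    set a : ℕ → ℝ≥0∞ := fun N => ∫⁻ x, RNop M τ N f x ∂μ with hadef
    set s : ℕ → ℝ≥0∞ := fun N => ∫⁻ x, Sop M τ (RNop M τ N f) x ∂μ with hsdef
    have hRN_meas : ∀ N, Measurable (RNop M τ N f) := meas_RNop hst hf
    have hRN_le : ∀ N x, RNop M τ N f x ≤ (N : ℝ≥0∞) := by
      intro N x
      haveI := M.prob x
      calc RNop M τ N f x ≤ ∫⁻ _, (N : ℝ≥0∞) * 1 ∂M.law x :=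
            lintegral_mono fun ω => rInt_le_of_le hf1 N ω
        _ = (N : ℝ≥0∞) := by rw [lintegral_const, measure_univ, mul_one, mul_one]
    have ha_fin : ∀ N, a N ≠ ⊤ := by
      intro N
      refine ne_of_lt (lt_of_le_of_lt (lintegral_mono (hRN_le N)) ?_)
      rw [lintegral_const]
      exact ENNReal.mul_lt_top (ENNReal.natCast_lt_top N) (measure_lt_top μ Set.univ)
    have ha_mono : Monotone a := fun N N' h => lintegral_mono fun x => RNop_mono h x
    have hE : ∀ N, s N + a (N + 1) = μ A + a N := by
      intro N
      have h1 : a (N + 1) = μ A + ∫⁻ x, TopOp M τ (RNop M τ N f) x ∂μ := by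
        calc a (N + 1) = ∫⁻ x, (f x + TopOp M τ (RNop M τ N f) x) ∂μ :=
              lintegral_congr fun x => rN_identity hst hθ hf N x
          _ = ∫⁻ x, f x ∂μ + ∫⁻ x, TopOp M τ (RNop M τ N f) x ∂μ := lintegral_add_left hf _
          _ = μ A + ∫⁻ x, TopOp M τ (RNop M τ N f) x ∂μ := by rw [lintegral_indicator_one hA]
      have h2 : s N + ∫⁻ x, TopOp M τ (RNop M τ N f) x ∂μ = a N := by
        calc s N + ∫⁻ x, TopOp M τ (RNop M τ N f) x ∂μ
            = ∫⁻ x, (Sop M τ (RNop M τ N f) x + TopOp M τ (RNop M τ N f) x) ∂μ :=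
              (lintegral_add_left (meas_Sop hst (hRN_meas N)) _).symm
          _ = ∫⁻ x, Pop M (RNop M τ N f) x ∂μ :=
              lintegral_congr fun x => (pop_split hst hθ _ x).symm
          _ = a N := hinv _ (hRN_meas N) ⟨N, ENNReal.natCast_ne_top N, hRN_le N⟩
      rw [h1, ← h2]; ring
    have htel : ∀ K : ℕ, (∑ N ∈ Finset.range K, s N) + a K = (K : ℝ≥0∞) * μ A := by
      intro K
      induction K with
      | zero => simp [hadef, RNop_zero]
      | succ K ih =>
        rw [Finset.sum_range_succ]
        calc ∑ N ∈ Finset.range K, s N + s K + a (K + 1)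
            = (∑ N ∈ Finset.range K, s N) + (s K + a (K + 1)) := by ring
          _ = (∑ N ∈ Finset.range K, s N) + (μ A + a K) := by rw [hE K]
          _ = ((∑ N ∈ Finset.range K, s N) + a K) + μ A := by ring
          _ = (K : ℝ≥0∞) * μ A + μ A := by rw [ih]
          _ = ((K + 1 : ℕ) : ℝ≥0∞) * μ A := by push_cast; ring
    set L := ⨆ N, s N with hLdef
    have hsle : ∀ N, s N ≤ μ A := by
      intro N
      have h1 : s N + a (N + 1) ≤ μ A + a (N + 1) := by
        rw [hE N]
        exact add_le_add_right (ha_mono (Nat.le_succ N)) _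
      exact (ENNReal.add_le_add_iff_right (ha_fin (N + 1))).mp h1
    have hLle : L ≤ μ A := iSup_le hsle
    have hak_div : Tendsto (fun K : ℕ => a K / (K : ℝ≥0∞)) atTop (𝓝 0) := by
      have heq : ∀ K : ℕ, a K / (K : ℝ≥0∞) = ∫⁻ x, RNop M τ K f x * (K : ℝ≥0∞)⁻¹ ∂μ := by
        intro K
        rw [lintegral_mul_const _ (hRN_meas K), div_eq_mul_inv]
      have hdct := tendsto_lintegral_of_dominated_convergence (μ := μ)
        (F := fun K x => RNop M τ K f x * (K : ℝ≥0∞)⁻¹) (f := fun _ => 0) (fun _ => 1)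
        (fun K => (hRN_meas K).mul_const _)
        (fun K => Filter.Eventually.of_forall fun x => ?_)
        (by simpa using measure_ne_top μ Set.univ)
        (Filter.Eventually.of_forall fun x => ?_)
      · simp only [lintegral_zero] at hdct
        have : (fun K : ℕ => a K / (K : ℝ≥0∞))
            = fun K : ℕ => ∫⁻ x, RNop M τ K f x * (K : ℝ≥0∞)⁻¹ ∂μ := funext heq
        rw [this]
        exact hdct
      · -- bound by 1
        show RNop M τ K f x * (K : ℝ≥0∞)⁻¹ ≤ 1
        cases K with
        | zero => simp [RNop_zero]
        | succ K =>
          calc RNop M τ (K + 1) f x * ((K + 1 : ℕ) : ℝ≥0∞)⁻¹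
              ≤ ((K + 1 : ℕ) : ℝ≥0∞) * ((K + 1 : ℕ) : ℝ≥0∞)⁻¹ :=
                mul_le_mul_left (hRN_le (K + 1) x) _
            _ = 1 := ENNReal.mul_inv_cancel (by exact_mod_cast Nat.succ_ne_zero K)
                (ENNReal.natCast_ne_top _)
          done
      · -- pointwise convergence
        have hub : ∀ K : ℕ, RNop M τ K f x * (K : ℝ≥0∞)⁻¹ ≤ EtauE M τ x * (K : ℝ≥0∞)⁻¹ := by
          intro K
          refine mul_le_mul_left ?_ _
          exact lintegral_mono fun ω => rInt_le_tau hf1 K ω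
        have hlim : Tendsto (fun K : ℕ => EtauE M τ x * (K : ℝ≥0∞)⁻¹) atTop (𝓝 0) := by
          have := ENNReal.Tendsto.const_mul (a := EtauE M τ x)
            ENNReal.tendsto_inv_nat_nhds_zero (Or.inr (hτ x))
          simpa using this
        exact tendsto_of_tendsto_of_tendsto_of_le_of_le tendsto_const_nhds hlim
          (fun K => zero_le) hub
    have hKb : ∀ K : ℕ, 1 ≤ K → μ A ≤ L + a K / (K : ℝ≥0∞) := by
      intro K hK
      have hK0 : (K : ℝ≥0∞) ≠ 0 := by exact_mod_cast (by omega : K ≠ 0)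
      have hKt : (K : ℝ≥0∞) ≠ ⊤ := ENNReal.natCast_ne_top K
      rw [← ENNReal.mul_le_mul_iff_right hK0 hKt]
      calc (K : ℝ≥0∞) * μ A = (∑ N ∈ Finset.range K, s N) + a K := (htel K).symm
        _ ≤ (∑ _N ∈ Finset.range K, L) + a K := by
            exact add_le_add_left (Finset.sum_le_sum fun N _ => le_iSup s N) _
        _ = (K : ℝ≥0∞) * L + a K := by
            rw [Finset.sum_const, Finset.card_range, nsmul_eq_mul]
        _ = (K : ℝ≥0∞) * L + (K : ℝ≥0∞) * (a K / (K : ℝ≥0∞)) := by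
            rw [ENNReal.mul_div_cancel' (fun h => absurd h hK0) (fun h => absurd h hKt)]
        _ = (K : ℝ≥0∞) * (L + a K / (K : ℝ≥0∞)) := by ring
    have hALle : μ A ≤ L := by
      have hlim : Tendsto (fun K : ℕ => L + a K / (K : ℝ≥0∞)) atTop (𝓝 L) := by
        have := Filter.Tendsto.add (tendsto_const_nhds (x := L) (f := atTop (α := ℕ))) hak_div
        simpa using this
      exact ge_of_tendsto hlim (Filter.eventually_atTop.mpr ⟨1, hKb⟩)
    have hμA : μ A = L := le_antisymm hALle hLle
    calc μ A = L := hμA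
      _ = ⨆ N, ∫⁻ x, RNop M τ N f x ∂ν := by
          rw [hLdef]
          exact iSup_congr fun N => (hT (hRN_meas N)).symm ▸ rfl
      _ = ∫⁻ x, ⨆ N, RNop M τ N f x ∂ν :=
          (lintegral_iSup (fun N => hRN_meas N) (fun N N' h x => RNop_mono h x)).symm
      _ = ∫⁻ x, Rop M τ f x ∂ν :=
          lintegral_congr fun x => (rop_eq_iSup hst hτ hf x).symm
  have hne : ν ≠ 0 := by
    intro h
    apply hμ0
    rw [← Measure.measure_univ_eq_zero]
    rw [hRstar Set.univ MeasurableSet.univ, h]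
    simp
  exact ⟨ν, hSstar, hfin, hne, hQinv, hac, hRstar⟩

end
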